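/- arXiv:1709.03768 — 2 statements merged into one kernel-verified Lean document; each statement's English description precedes it below -/
import Mathlib

section
/- Assume bounded instance-dependent noise: 0 ≤ ρ_{+1}(x), 0 ≤ ρ_{-1}(x), and ρ_{+1}(x) + ρ_{-1}(x) < 1 for all x. Fix x and let UB(ρ_{+1}(x)) and UB(ρ_{-1}(x)) be upper bounds on ρ_{+1}(x) and ρ_{-1}(x) respectively, each strictly less than 1. Then: (i) if η̃(x) < (1 - UB(ρ_{+1}(x)))/2, the Bayes optimal classifier under the clean distribution assigns label -1 to x (i.e., η(x) < 1/2); (ii) if η̃(x) > (1 + UB(ρ_{-1}(x)))/2, the Bayes optimal classifier under the clean distribution assigns label +1 to x (i.e., η(x) > 1/2). -/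
/-- Per-instance distilled-example criterion with upper bounds.
Fix `x` and let `ubp ≥ ρ₊(x)` and `ubm ≥ ρ₋(x)` be upper bounds, each
strictly less than 1.  If `η̃(x) < (1 - ubp)/2` then the Bayes optimal label
at `x` is `-1` (i.e. `η(x) < 1/2`); if `η̃(x) > (1 + ubm)/2` then the Bayes
optimal label at `x` is `+1` (i.e. `η(x) > 1/2`). -/
theorem distilled_example_criterion_with_upper_bounds
    (η ηt ρp ρm ubp ubm : ℝ)
    (hη0 : 0 ≤ η) (hη1 : η ≤ 1)
    (hρp0 : 0 ≤ ρp) (hρm0 : 0 ≤ ρm)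
    (hsum : ρp + ρm < 1)
    (hubp : ρp ≤ ubp) (hubp1 : ubp < 1)
    (hubm : ρm ≤ ubm) (hubm1 : ubm < 1)
    (hηt : ηt = (1 - ρp) * η + ρm * (1 - η)) :
    (ηt < (1 - ubp) / 2 → η < 1/2) ∧
    (ηt > (1 + ubm) / 2 → η > 1/2) := by
  constructor
  · intro h; by_contra hc; push_neg at hc; nlinarith
  · intro h; by_contra hc; push_neg at hc; nlinarith
end

section
/- Assume 0 ≤ ρ_{+1}(x) ≤ ρ_{+1max} < 1 and 0 ≤ ρ_{-1}(x) ≤ ρ_{-1max} < 1 and ρ_{+1}(x)+ρ_{-1}(x) < 1 for all x. Then for any x: if η̃(x) < (1 - ρ_{+1max})/2 then η(x) < 1/2, and if η̃(x) > (1 + ρ_{-1max})/2 then η(x) > 1/2. -/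
/-- Distilled-example criterion with uniform noise-rate bounds
(Corollary).  Under BILN with `ρ₊(x) ≤ ρ₊max < 1`, `ρ₋(x) ≤ ρ₋max < 1` and
`ρ₊(x) + ρ₋(x) < 1` for all `x`: if `η̃(x) < (1 - ρ₊max)/2` then
`η(x) < 1/2`, and if `η̃(x) > (1 + ρ₋max)/2` then `η(x) > 1/2`. -/
theorem distilled_example_criterion_uniform_bounds
    {X : Type*} (η ηt ρp ρm : X → ℝ) (ρpmax ρmmax : ℝ)
    (hη : ∀ x, 0 ≤ η x ∧ η x ≤ 1)
    (hρp : ∀ x, 0 ≤ ρp x ∧ ρp x ≤ ρpmax) (hρpmax : ρpmax < 1)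
    (hρm : ∀ x, 0 ≤ ρm x ∧ ρm x ≤ ρmmax) (hρmmax : ρmmax < 1)
    (hsum : ∀ x, ρp x + ρm x < 1)
    (hηt : ∀ x, ηt x = (1 - ρp x) * η x + ρm x * (1 - η x)) :
    ∀ x, (ηt x < (1 - ρpmax) / 2 → η x < 1/2) ∧
         (ηt x > (1 + ρmmax) / 2 → η x > 1/2) := by
  intro x
  obtain ⟨h0, h1⟩ := hη x
  obtain ⟨hp0, hp1⟩ := hρp x
  obtain ⟨hm0, hm1⟩ := hρm x
  have hs := hsum x
  have ht := hηt x
  constructor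
  · intro h
    by_contra hc
    push_neg at hc
    nlinarith [mul_nonneg hm0 (sub_nonneg.2 h1), mul_nonneg hp0 h0]
  · intro h
    by_contra hc
    push_neg at hc
    nlinarith [mul_nonneg hm0 (sub_nonneg.2 h1), mul_nonneg hp0 h0]
end
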